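/- The full subcategory of complete filtered objects inside filtered objects in an abelian category (with N^op-limits, AB4) is reflective: the completion functor V ↦ V̂ is left adjoint to the inclusion, with unit the natural map r : V → V̂, and the unit is an isomorphism precisely on complete objects. -/

import Mathlib

/-!
STATEMENT 2: The full subcategory of complete filtered objects inside filtered objects in an
abelian category (with `ℕᵒᵖ`-limits, AB4) is reflective: the completion functor `V ↦ V̂` is left
adjoint to the inclusion, with unit the natural map `r : V → V̂`, and the unit is an isomorphism
precisely on complete objects.

Reflectivity with unit `r` is rendered by the universal property: the completion of a filtered
object is a complete filtered object, and for every filtered `V` and every complete filtered `W`,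
precomposition with `r_V` is a bijection `Hom(V̂, W) ≅ Hom(V, W)`.
-/

open CategoryTheory CategoryTheory.Limits Opposite

universe v u

variable {A : Type u} [Category.{v} A] [Abelian A]
  [HasCoproducts A] [AB4 A] [HasLimitsOfShape ℕᵒᵖ A]

/-- A filtered object: an `ℕᵒᵖ`-indexed diagram all of whose structure maps are monos. -/
def IsFilteredObj (V : ℕᵒᵖ ⥤ A) : Prop :=
  ∀ {a b : ℕᵒᵖ} (f : a ⟶ b), Mono (V.map f)

/-- The diagram `a ↦ coker (i_a : F_a V ⟶ F_0 V)`. -/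
noncomputable def cokerDiagram (V : ℕᵒᵖ ⥤ A) : ℕᵒᵖ ⥤ A where
  obj a := cokernel (V.map (homOfLE (Nat.zero_le a.unop)).op)
  map {a b} f := cokernel.map _ _ (V.map f) (𝟙 _) (by
    rw [Category.comp_id, ← V.map_comp]
    congr 1)
  map_id := by intro a; ext; simp
  map_comp := by intro a b c f g; ext; simp

/-- The completion `V̂` of a filtered object, with `F_e V̂ = ker (lim_a coker i_a → coker i_e)`. -/
noncomputable def completion (V : ℕᵒᵖ ⥤ A) : ℕᵒᵖ ⥤ A where
  obj e := kernel (limit.π (cokerDiagram V) e)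
  map {a b} f := kernel.lift _ (kernel.ι _) (by
    rw [← limit.w (cokerDiagram V) f, ← Category.assoc, kernel.condition, zero_comp])
  map_id := by intro a; ext; simp
  map_comp := by intro a b c f g; ext; simp

/-- The canonical map `F₀ W ⟶ lim_a coker (F_a W → F₀ W)`. -/
noncomputable def toCompletionZero (W : ℕᵒᵖ ⥤ A) : W.obj (op 0) ⟶ limit (cokerDiagram W) :=
  limit.lift _
    { pt := W.obj (op 0)
      π :=
        { app := fun _ => cokernel.π _
          naturality := by
            intro a b f
            simp [cokerDiagram, cokernel.map] } }

/-- A filtered object is complete when the canonical map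
`F₀ W → lim_a coker (F_a W → F₀ W)` is an isomorphism. -/
def IsCompleteObj (W : ℕᵒᵖ ⥤ A) : Prop := IsIso (toCompletionZero W)

/-- The canonical (unit) morphism `r : V ⟶ V̂`. -/
noncomputable def unitMap (V : ℕᵒᵖ ⥤ A) : V ⟶ completion V where
  app e := kernel.lift _ (V.map (homOfLE (Nat.zero_le e.unop)).op ≫ toCompletionZero V) (by
    rw [Category.assoc]
    have : toCompletionZero V ≫ limit.π (cokerDiagram V) e = cokernel.π _ := by
      simp [toCompletionZero]
      rfl
    rw [this]
    exact cokernel.condition _)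
  naturality := by
    intro a b f
    dsimp only [completion]
    ext
    simp only [Category.assoc, kernel.lift_ι, kernel.lift_ι_assoc]
    rw [← Category.assoc, ← V.map_comp]
    congr 2

set_option linter.unusedSectionVars false

namespace Statement2Aux

variable (V W : ℕᵒᵖ ⥤ A)

/-- Shorthand for the structure map `i_e : F_e V ⟶ F_0 V`. -/
abbrev ix (e : ℕᵒᵖ) : V.obj e ⟶ V.obj (op 0) :=
  V.map (homOfLE (Nat.zero_le e.unop)).op

variable {V W}

lemma map_ix {a b : ℕᵒᵖ} (f : a ⟶ b) : V.map f ≫ ix V b = ix V a := by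
  rw [← V.map_comp]; congr 1

lemma ix_zero : ix V (op 0) = 𝟙 _ := by
  have h : (homOfLE (Nat.zero_le (unop (op (0 : ℕ))))).op = 𝟙 (op (0 : ℕ)) := rfl
  show V.map (homOfLE (Nat.zero_le (unop (op (0 : ℕ))))).op = 𝟙 _
  rw [h, V.map_id]

lemma t_pi (e : ℕᵒᵖ) :
    toCompletionZero V ≫ limit.π (cokerDiagram V) e = cokernel.π (ix V e) :=
  limit.lift_π _ _

lemma comp_map_ι {a b : ℕᵒᵖ} (f : a ⟶ b) :
    (completion V).map f ≫ kernel.ι (limit.π (cokerDiagram V) b) =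
      kernel.ι (limit.π (cokerDiagram V) a) :=
  kernel.lift_ι _ _ _

lemma unit_ι (e : ℕᵒᵖ) :
    (unitMap V).app e ≫ kernel.ι (limit.π (cokerDiagram V) e) =
      ix V e ≫ toCompletionZero V :=
  kernel.lift_ι _ _ _

lemma pi_epi (e : ℕᵒᵖ) : Epi (limit.π (cokerDiagram V) e) := by
  haveI : Epi (toCompletionZero V ≫ limit.π (cokerDiagram V) e) := by
    rw [t_pi]; exact (inferInstance : Epi (cokernel.π (ix V e)))
  exact epi_of_epi (toCompletionZero V) _

lemma pi_zero : limit.π (cokerDiagram V) (op 0) = 0 := by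
  haveI : Epi (ix V (op 0)) := by rw [ix_zero]; infer_instance
  have h1 : cokernel.π (ix V (op 0)) = 0 :=
    zero_of_epi_comp (ix V (op 0)) (cokernel.condition _)
  have h2 : (𝟙 ((cokerDiagram V).obj (op 0))) = 0 := by
    erw [← cancel_epi (cokernel.π (ix V (op 0)))]; simp [h1]; exact zero_comp.trans zero_comp.symm
  rw [← Category.comp_id (limit.π (cokerDiagram V) (op 0)), h2, comp_zero]

lemma ι0_iso : IsIso (kernel.ι (limit.π (cokerDiagram V) (op 0))) := by
  refine ⟨kernel.lift _ (𝟙 _) (by rw [Category.id_comp, pi_zero]), ?_, ?_⟩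
  · rw [← cancel_mono (kernel.ι (limit.π (cokerDiagram V) (op 0)))]
    simp
  · simp

/-- The natural transformation on coker diagrams induced by a map of filtered objects. -/
noncomputable def cokerMap (φ : V ⟶ W) : cokerDiagram V ⟶ cokerDiagram W where
  app a := cokernel.map (ix V a) (ix W a) (φ.app a) (φ.app (op 0)) (φ.naturality _)
  naturality a b f := by
    apply coequalizer.hom_ext
    simp [cokerDiagram]

lemma cokerMap_pi (φ : V ⟶ W) (a : ℕᵒᵖ) :
    cokernel.π (ix V a) ≫ (cokerMap φ).app a = φ.app (op 0) ≫ cokernel.π (ix W a) := by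
  show cokernel.π (ix V a) ≫ cokernel.map (ix V a) (ix W a) (φ.app a) (φ.app (op 0))
    (φ.naturality _) = _
  simp

lemma t_natural (φ : V ⟶ W) :
    toCompletionZero V ≫ limMap (cokerMap φ) = φ.app (op 0) ≫ toCompletionZero W := by
  apply limit.hom_ext
  intro e
  rw [Category.assoc, limMap_π, ← Category.assoc, t_pi, Category.assoc, t_pi]
  exact cokerMap_pi φ e

variable (V)

/-- The comparison `coker(i_a : F_a V̂ ⟶ F_0 V̂) ⟶ coker(i_a : F_a V ⟶ F_0 V)`. -/
noncomputable def kappa (a : ℕᵒᵖ) :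
    cokernel (ix (completion V) a) ⟶ cokernel (ix V a) :=
  cokernel.desc _ (kernel.ι (limit.π (cokerDiagram V) (op 0)) ≫ limit.π (cokerDiagram V) a)
    (by erw [← Category.assoc, comp_map_ι, kernel.condition]; rfl)

lemma kappa_pi (a : ℕᵒᵖ) :
    cokernel.π (ix (completion V) a) ≫ kappa V a =
      kernel.ι (limit.π (cokerDiagram V) (op 0)) ≫ limit.π (cokerDiagram V) a :=
  cokernel.π_desc _ _ _

lemma kappa_iso (a : ℕᵒᵖ) : IsIso (kappa V a) := by
  haveI := ι0_iso (V := V)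
  haveI := pi_epi (V := V) a
  haveI : Epi (kappa V a) := by
    haveI : Epi (kernel.ι (limit.π (cokerDiagram V) (op 0)) ≫ limit.π (cokerDiagram V) a) :=
      epi_comp _ _
    exact @epi_of_epi_fac _ _ _ _ _ _ _ _ this (kappa_pi V a)
  haveI : Mono (kappa V a) := by
    have heq : kappa V a =
        (cokernel.mapIso (ix (completion V) a) (kernel.ι (limit.π (cokerDiagram V) a))
          (Iso.refl _)
          (@asIso _ _ _ _ (kernel.ι (limit.π (cokerDiagram V) (op 0))) (ι0_iso (V := V)))
          (by exact (comp_map_ι _).trans (Category.id_comp _).symm)).hom ≫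
          Abelian.factorThruCoimage (limit.π (cokerDiagram V) a) := by
      erw [← cancel_epi (cokernel.π (ix (completion V) a)), kappa_pi]
      simp [cokernel.mapIso]
      erw [← Category.assoc, cokernel.π_desc, Category.assoc, Abelian.coimage.fac]
      rfl
    rw [heq]
    exact mono_comp' inferInstance
      (inferInstance : Mono (Abelian.factorThruCoimage (limit.π (cokerDiagram V) a)))
  exact isIso_of_mono_of_epi _

/-- The comparison of coker diagrams `cokerDiagram (completion V) ⟶ cokerDiagram V`. -/
noncomputable def kappaNat : cokerDiagram (completion V) ⟶ cokerDiagram V where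
  app a := kappa V a
  naturality a b f := by
    erw [← cancel_epi (cokernel.π (ix (completion V) a))]
    have h1 : cokernel.π (ix (completion V) a) ≫ (cokerDiagram (completion V)).map f =
        cokernel.π (ix (completion V) b) := by
      simp [cokerDiagram]
    have h2 : cokernel.π (ix V a) ≫ (cokerDiagram V).map f = cokernel.π (ix V b) := by
      simp [cokerDiagram]
    erw [← Category.assoc, h1, kappa_pi, ← Category.assoc, kappa_pi, Category.assoc, limit.w]
    rfl

lemma completion_filtered : IsFilteredObj (completion V) := by
  intro a b f
  haveI : Mono ((completion V).map f ≫ kernel.ι (limit.π (cokerDiagram V) b)) := by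
    rw [comp_map_ι]; exact (inferInstance : Mono (kernel.ι (limit.π (cokerDiagram V) a)))
  exact mono_of_mono _ (kernel.ι (limit.π (cokerDiagram V) b))

lemma completion_complete : IsCompleteObj (completion V) := by
  haveI : ∀ a, IsIso ((kappaNat V).app a) := fun a => kappa_iso V a
  haveI : IsIso (kappaNat V) := NatIso.isIso_of_isIso_app _
  haveI := ι0_iso (V := V)
  have h : toCompletionZero (completion V) ≫ (HasLimit.isoOfNatIso (asIso (kappaNat V))).hom =
      kernel.ι (limit.π (cokerDiagram V) (op 0)) := by
    apply limit.hom_ext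
    intro a
    rw [Category.assoc, HasLimit.isoOfNatIso_hom_π, ← Category.assoc, t_pi]
    exact kappa_pi V a
  have h2 : toCompletionZero (completion V) =
      kernel.ι (limit.π (cokerDiagram V) (op 0)) ≫
        (HasLimit.isoOfNatIso (asIso (kappaNat V))).inv := by
    rw [← h]; exact ((Iso.comp_inv_eq _).mpr rfl).symm
  show IsIso (toCompletionZero (completion V))
  rw [h2]
  exact (inferInstance : IsIso (kernel.ι (limit.π (cokerDiagram V) (op 0)) ≫
    (HasLimit.isoOfNatIso (asIso (kappaNat V))).inv))

variable {V}

lemma unit_app_iso (hV : IsFilteredObj V) [IsIso (toCompletionZero V)] (e : ℕᵒᵖ) :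
    IsIso ((unitMap V).app e) := by
  haveI : Mono (ix V e) := hV _
  have hcond : (kernel.ι (limit.π (cokerDiagram V) e) ≫ inv (toCompletionZero V)) ≫
      cokernel.π (ix V e) = 0 := by
    rw [← t_pi e]
    change (kernel.ι (limit.π (cokerDiagram V) e) ≫ inv (toCompletionZero V)) ≫
      (toCompletionZero V ≫ limit.π (cokerDiagram V) e) = 0
    simp
  refine ⟨Abelian.monoLift (ix V e) _ hcond, ?_, ?_⟩
  · erw [← cancel_mono (ix V e), Category.assoc, Abelian.monoLift_comp, Category.id_comp,
      ← Category.assoc, unit_ι]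
    erw [Category.assoc, IsIso.hom_inv_id, Category.comp_id]
  · erw [← cancel_mono (kernel.ι (limit.π (cokerDiagram V) e)), Category.assoc, unit_ι,
      ← Category.assoc, Abelian.monoLift_comp]
    erw [Category.assoc, IsIso.inv_hom_id, Category.comp_id, Category.id_comp]

lemma complete_implies_unit_iso (hV : IsFilteredObj V) (h : IsCompleteObj V) :
    IsIso (unitMap V) := by
  haveI : IsIso (toCompletionZero V) := h
  haveI : ∀ e, IsIso ((unitMap V).app e) := fun e => unit_app_iso hV e
  exact NatIso.isIso_of_isIso_app _

lemma unit_iso_implies_complete (h : IsIso (unitMap V)) : IsCompleteObj V := by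
  haveI := h
  haveI : IsIso ((unitMap V).app (op 0)) := inferInstance
  haveI := ι0_iso (V := V)
  have heq : (unitMap V).app (op 0) ≫ kernel.ι (limit.π (cokerDiagram V) (op 0)) =
      toCompletionZero V := by
    rw [unit_ι, ix_zero, Category.id_comp]
  show IsIso (toCompletionZero V)
  rw [← heq]
  exact @IsIso.comp_isIso _ _ _ _ _ _ _ inferInstance (ι0_iso (V := V))

lemma cancel_unit (hW : IsFilteredObj W) (hWc : IsCompleteObj W) (g : completion V ⟶ W)
    (h : unitMap V ≫ g = 0) : g = 0 := by
  haveI : IsIso (toCompletionZero W) := hWc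
  have h0 : (unitMap V).app (op 0) ≫ g.app (op 0) = 0 := by
    have := congrArg (fun α => NatTrans.app α (op 0)) h
    simpa using this
  have hbar : ∀ a, (cokerMap g).app a = 0 := by
    intro a
    haveI := kappa_iso V a
    have hfac : ((unitMap V).app (op 0) ≫ cokernel.π (ix (completion V) a)) ≫ kappa V a =
        cokernel.π (ix V a) := by
      erw [Category.assoc, kappa_pi, ← Category.assoc, unit_ι, ix_zero, Category.id_comp, t_pi]
    have hrew : (unitMap V).app (op 0) ≫ cokernel.π (ix (completion V) a) =
        cokernel.π (ix V a) ≫ inv (kappa V a) := by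
      rw [← hfac]; simp
    haveI : Epi ((unitMap V).app (op 0) ≫ cokernel.π (ix (completion V) a)) := by
      rw [hrew]; exact epi_comp _ _
    apply zero_of_epi_comp ((unitMap V).app (op 0) ≫ cokernel.π (ix (completion V) a))
    erw [Category.assoc, cokerMap_pi, ← Category.assoc, h0, zero_comp]
  have hlim : limMap (cokerMap g) = 0 := by
    apply limit.hom_ext
    intro a
    rw [limMap_π, hbar, comp_zero, zero_comp]
  have hg0 : g.app (op 0) = 0 := by
    have ht := t_natural g
    rw [hlim, comp_zero] at ht
    exact zero_of_comp_mono (toCompletionZero W) ht.symm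
  ext e
  have hz : g.app e ≫ ix W e = 0 := by
    have hn := g.naturality ((homOfLE (Nat.zero_le e.unop)).op : e ⟶ op 0)
    rw [hg0, comp_zero] at hn
    rw [← hn]
  haveI : Mono (ix W e) := hW _
  have := zero_of_comp_mono (ix W e) hz
  simpa using this

lemma unit_precomp_injective (hW : IsFilteredObj W) (hWc : IsCompleteObj W)
    (g₁ g₂ : completion V ⟶ W) (h : unitMap V ≫ g₁ = unitMap V ≫ g₂) : g₁ = g₂ := by
  have hsub : unitMap V ≫ (g₁ - g₂) = 0 := by
    rw [Preadditive.comp_sub, h, sub_self]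
  have := cancel_unit hW hWc (g₁ - g₂) hsub
  rwa [sub_eq_zero] at this

lemma unit_precomp_surjective (hW : IsFilteredObj W) (hWc : IsCompleteObj W) (φ : V ⟶ W) :
    ∃ g : completion V ⟶ W, unitMap V ≫ g = φ := by
  haveI : IsIso (toCompletionZero W) := hWc
  haveI : ∀ e : ℕᵒᵖ, Mono (ix W e) := fun e => hW _
  have hcond : ∀ e : ℕᵒᵖ, (kernel.ι (limit.π (cokerDiagram V) e) ≫ limMap (cokerMap φ) ≫
      inv (toCompletionZero W)) ≫ cokernel.π (ix W e) = 0 := by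
    intro e
    rw [← t_pi e]
    change (kernel.ι (limit.π (cokerDiagram V) e) ≫ limMap (cokerMap φ) ≫
        inv (toCompletionZero W)) ≫ (toCompletionZero W ≫ limit.π (cokerDiagram W) e) = 0
    simp [limMap_π]
  refine ⟨{ app := fun e => Abelian.monoLift (ix W e) _ (hcond e), naturality := ?_ }, ?_⟩
  · intro a b f
    erw [← cancel_mono (ix W b), Category.assoc, Abelian.monoLift_comp, ← Category.assoc,
      comp_map_ι, Category.assoc, map_ix, Abelian.monoLift_comp]
    rfl
  · ext e
    show (unitMap V).app e ≫ Abelian.monoLift (ix W e) _ (hcond e) = φ.app e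
    erw [← cancel_mono (ix W e), Category.assoc, Abelian.monoLift_comp, ← φ.naturality]
    erw [← Category.assoc, unit_ι, Category.assoc, reassoc_of% (t_natural φ)]
    show ix V e ≫ φ.app (op 0) ≫ toCompletionZero W ≫ inv (toCompletionZero W) = _
    simp

end Statement2Aux

/-- Complete filtered objects are a reflective subcategory of filtered objects, with the
completion as reflector and the canonical map `r` as unit; moreover the unit is an isomorphism
precisely on the complete objects. -/
theorem statement2 :
    (∀ V : ℕᵒᵖ ⥤ A, IsFilteredObj V →
        IsFilteredObj (completion V) ∧ IsCompleteObj (completion V)) ∧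
    (∀ V W : ℕᵒᵖ ⥤ A, IsFilteredObj V → IsFilteredObj W → IsCompleteObj W →
        Function.Bijective (fun g : completion V ⟶ W => unitMap V ≫ g)) ∧
    (∀ V : ℕᵒᵖ ⥤ A, IsFilteredObj V → (IsIso (unitMap V) ↔ IsCompleteObj V)) := by
  refine ⟨fun V _ => ⟨Statement2Aux.completion_filtered V, Statement2Aux.completion_complete V⟩,
    fun V W _ hW hWc => ⟨fun g₁ g₂ h => ?_, fun φ => ?_⟩,
    fun V hV => ⟨fun h => Statement2Aux.unit_iso_implies_complete h,
      fun h => Statement2Aux.complete_implies_unit_iso hV h⟩⟩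
  · exact Statement2Aux.unit_precomp_injective hW hWc g₁ g₂ h
  · exact Statement2Aux.unit_precomp_surjective hW hWc φ
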